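/- For all t ∈ (−∞, α₀), the functions ζ and χ satisfy the first equation of the ODE system of Section 5.3: χ(t)·ζ′(t) − χ′(t) = 1. -/

import Mathlib

open MeasureTheory

/-- Let `α > 0`, `α₀ ∈ ℝ`, and `R : (−∞, α₀] → (0, ∞)` smooth and positive with
`C_R := ∫_{−∞}^{α₀} dt/R(t) < +∞`. Define `G(t) = 1/(α·R(α₀)) + ∫_t^{α₀} dt₁/R(t₁)`,
`ζ(t) = log(1/(α·R(α₀)) + C_R) − log G(t)` and
`χ(t) = (∫_t^{α₀} G(t₂) dt₂ + 1/(α²·R(α₀)))/G(t)`.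
Then for all `t < α₀`, the first ODE of Section 5.3 holds: `χ(t)·ζ′(t) − χ′(t) = 1`. -/
theorem stmt_4 (α α₀ : ℝ) (hα : 0 < α) (R : ℝ → ℝ)
    (hRpos : ∀ s ≤ α₀, 0 < R s)
    (hRsmooth : ContDiffOn ℝ (⊤ : ℕ∞) R (Set.Iic α₀))
    (hRint : IntegrableOn (fun s => 1 / R s) (Set.Iic α₀))
    (G ζ χ : ℝ → ℝ)
    (hG : ∀ s, G s = 1 / (α * R α₀) + ∫ u in s..α₀, 1 / R u)
    (hζ : ∀ s, ζ s =
      Real.log (1 / (α * R α₀) + ∫ u in Set.Iic α₀, 1 / R u) - Real.log (G s))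
    (hχ : ∀ s, χ s = ((∫ u in s..α₀, G u) + 1 / (α ^ 2 * R α₀)) / G s)
    (t : ℝ) (ht : t < α₀) :
    χ t * deriv ζ t - deriv χ t = 1 := by
  set g : ℝ → ℝ := fun u => 1 / R u with hgdef
  have hRα₀ : 0 < R α₀ := hRpos α₀ le_rfl
  have hgint : ∀ a b : ℝ, a ≤ α₀ → b ≤ α₀ → IntervalIntegrable g volume a b := by
    intro a b ha hb
    rw [intervalIntegrable_iff]
    refine hRint.mono_set (fun x hx => ?_)
    rcases Set.mem_uIoc.mp hx with h | h
    · exact le_trans h.2 hb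
    · exact le_trans h.2 ha
  have hgcont : ContinuousOn g (Set.Iio α₀) := by
    refine ContinuousOn.div continuousOn_const
      ((hRsmooth.continuousOn).mono Set.Iio_subset_Iic_self) ?_
    intro x hx
    exact (hRpos x (le_of_lt hx)).ne'
  have hGeq : G = fun s => 1 / (α * R α₀) + ∫ x in s..α₀, g x := funext hG
  have hgnonneg : ∀ u ≤ α₀, 0 ≤ g u := fun u hu => le_of_lt (by
    simp only [hgdef, one_div]
    exact inv_pos.mpr (hRpos u hu))
  have hGderiv : ∀ s ∈ Set.Iio α₀, HasDerivAt G (-(g s)) s := by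
    intro s hs
    have h1 : HasDerivAt (fun u => ∫ x in u..α₀, g x) (-(g s)) s :=
      intervalIntegral.integral_hasDerivAt_left (hgint s α₀ hs.le le_rfl)
        (hgcont.stronglyMeasurableAtFilter isOpen_Iio s hs)
        (hgcont.continuousAt (Iio_mem_nhds hs))
    rw [hGeq]
    exact h1.const_add (1 / (α * R α₀))
  have hGcont : ContinuousOn G (Set.Iio α₀) := fun s hs =>
    (hGderiv s hs).continuousAt.continuousWithinAt
  have hGpos : ∀ s ≤ α₀, 0 < G s := by
    intro s hs
    rw [hG s]
    have h1 : 0 < 1 / (α * R α₀) := by positivity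
    have h2 : 0 ≤ ∫ x in s..α₀, g x :=
      intervalIntegral.integral_nonneg hs (fun u hu => hgnonneg u hu.2)
    linarith
  have hGanti : AntitoneOn G (Set.Iic α₀) := by
    intro a ha b hb hab
    rw [hG a, hG b]
    have hadd : (∫ x in a..b, g x) + ∫ x in b..α₀, g x = ∫ x in a..α₀, g x :=
      intervalIntegral.integral_add_adjacent_intervals (hgint a b ha hb)
        (hgint b α₀ hb le_rfl)
    have hnn : 0 ≤ ∫ x in a..b, g x :=
      intervalIntegral.integral_nonneg hab (fun u hu => hgnonneg u (le_trans hu.2 hb))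
    linarith
  have hGintI : ∀ a b : ℝ, a ≤ α₀ → b ≤ α₀ → IntervalIntegrable G volume a b := by
    intro a b ha hb
    refine (hGanti.mono ?_).intervalIntegrable
    intro x hx
    rcases Set.mem_uIcc.mp hx with h | h
    · exact le_trans h.2 hb
    · exact le_trans h.2 ha
  -- derivative of the primitive of G
  have hFderiv : HasDerivAt (fun s => ∫ x in s..α₀, G x) (-(G t)) t :=
    intervalIntegral.integral_hasDerivAt_left (hGintI t α₀ ht.le le_rfl)
      (hGcont.stronglyMeasurableAtFilter isOpen_Iio t ht)
      (hGcont.continuousAt (Iio_mem_nhds ht))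
  have hGt : 0 < G t := hGpos t ht.le
  have hGd : HasDerivAt G (-(g t)) t := hGderiv t ht
  -- derivative of ζ
  have hζeq : ζ = fun s =>
      Real.log (1 / (α * R α₀) + ∫ u in Set.Iic α₀, 1 / R u) - Real.log (G s) :=
    funext hζ
  have hζd : HasDerivAt ζ (g t / G t) t := by
    rw [hζeq]
    have := (hGd.log hGt.ne').const_sub
      (Real.log (1 / (α * R α₀) + ∫ u in Set.Iic α₀, 1 / R u))
    simpa [neg_div] using this
  -- derivative of χ
  have hχeq : χ = fun s => ((∫ u in s..α₀, G u) + 1 / (α ^ 2 * R α₀)) / G s :=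
    funext hχ
  have hχd : HasDerivAt χ
      ((-(G t) * G t - ((∫ u in t..α₀, G u) + 1 / (α ^ 2 * R α₀)) * (-(g t))) /
        (G t) ^ 2) t := by
    rw [hχeq]
    exact (hFderiv.add_const (1 / (α ^ 2 * R α₀))).div hGd hGt.ne'
  rw [hζd.deriv, hχd.deriv, hχ t]
  have hGne : G t ≠ 0 := hGt.ne'
  field_simp
  ring
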